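/- Let Ā, P, Ē ∈ ℝ^{q×q} with P symmetric positive definite and Ē invertible, C̄ ∈ ℝ^{p×q}, N ∈ ℝ^{q×p}, B̄_f ∈ ℝ^{q×m}, C_ω ∈ ℝ^{p×p}, H₁ ∈ ℝ^{m×p}, H₂ ∈ ℝ^{p×p}. Set L = Ē P⁻¹ N and assume: (i) the matrix P Ē⁻¹ Ā + Āᵀ Ē⁻ᵀ P − N C̄ − C̄ᵀ Nᵀ is negative definite; (ii) (H₁ C̄)ᵀ = P Ē⁻¹ B̄_f and (H₂ C̄)ᵀ = P Ē⁻¹ L C_ω. Let ρ = c + η with c ≥ 0, η ≥ 0, and ω̄ ≥ 0. Let ē : ℝ → ℝ^q be differentiable and let d̄ : ℝ → ℝ^m, ω : ℝ → ℝ^p satisfy |d̄(t)_i| ≤ c and |ω(t)_j| ≤ ω̄ for all t, i, j. Suppose ē satisfies for all t the error dynamics Ē ē′(t) = (Ā − L C̄) ē(t) + L C_ω ( −ω̄·sgn(H₂ C̄ ē(t)) − ω(t) ) + B̄_f ( d̄(t) − ρ·sgn(H₁ C̄ ē(t)) ). Then the function V(t) = ē(t)ᵀ P ē(t) is differentiable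 with V′(t) ≤ 0 for every t, and V′(t) < 0 whenever ē(t) ≠ 0. -/

import Mathlib

open Matrix

/-- Componentwise sign vector: `(sgn s) i = 1` if `s i > 0`, `-1` if `s i < 0`, `0` otherwise. -/
noncomputable def sgn {k : Type*} (s : k → ℝ) : k → ℝ := fun i => Real.sign (s i)

lemma mul_sign_self_eq_abs (x : ℝ) : x * Real.sign x = |x| := by
  rcases lt_trichotomy x 0 with h | h | h
  · rw [Real.sign_of_neg h, abs_of_neg h]; ring
  · simp [h]
  · rw [Real.sign_of_pos h, abs_of_pos h]; ring

/-- `x ⬝ᵥ Bᵀ *ᵥ w = (B *ᵥ x) ⬝ᵥ w`. -/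
lemma dot_transpose_mulVec {a b : ℕ} (B : Matrix (Fin a) (Fin b) ℝ)
    (x : Fin b → ℝ) (w : Fin a → ℝ) :
    x ⬝ᵥ Bᵀ.mulVec w = B.mulVec x ⬝ᵥ w := by
  rw [mulVec_transpose, dotProduct_comm, ← dotProduct_mulVec, dotProduct_comm]

lemma quad_transpose {n : ℕ} (B : Matrix (Fin n) (Fin n) ℝ) (x : Fin n → ℝ) :
    x ⬝ᵥ Bᵀ.mulVec x = x ⬝ᵥ B.mulVec x := by
  rw [dot_transpose_mulVec, dotProduct_comm]

lemma hasDerivV {q : ℕ} (P : Matrix (Fin q) (Fin q) ℝ) (e : ℝ → Fin q → ℝ)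
    (he : Differentiable ℝ e) (t : ℝ) :
    HasDerivAt (fun t => e t ⬝ᵥ P.mulVec (e t))
      (deriv e t ⬝ᵥ P.mulVec (e t) + e t ⬝ᵥ P.mulVec (deriv e t)) t := by
  have hcomp : ∀ i, HasDerivAt (fun t => e t i) (deriv e t i) t :=
    hasDerivAt_pi.mp (he t).hasDerivAt
  have key : HasDerivAt (fun t => ∑ i, ∑ j, e t i * (P i j * e t j))
      (∑ i, ∑ j, (deriv e t i * (P i j * e t j) + e t i * (P i j * deriv e t j))) t := by
    apply HasDerivAt.fun_sum; intro i _
    apply HasDerivAt.fun_sum; intro j _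
    exact (hcomp i).mul ((hcomp j).const_mul _)
  have heq : (fun t => e t ⬝ᵥ P.mulVec (e t))
      = fun t => ∑ i, ∑ j, e t i * (P i j * e t j) := by
    funext s
    simp [dotProduct, mulVec, Finset.mul_sum]
  rw [heq]
  convert key using 1
  simp only [dotProduct, mulVec, Finset.mul_sum]
  rw [← Finset.sum_add_distrib]
  refine Finset.sum_congr rfl fun i _ => ?_
  rw [← Finset.sum_add_distrib]

set_option maxHeartbeats 1000000 in
/-- Theorem 1 of the paper: stability of the augmented sliding mode observer
error dynamics.  The Lyapunov function `V(t) = ē(t)ᵀ P ē(t)` is differentiable with `V′ ≤ 0`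
everywhere and `V′(t) < 0` whenever `ē(t) ≠ 0`. -/
theorem stmt6 {q m p : ℕ}
    (A P E : Matrix (Fin q) (Fin q) ℝ)
    (hPsymm : Pᵀ = P) (hPpos : ∀ x : Fin q → ℝ, x ≠ 0 → 0 < x ⬝ᵥ P.mulVec x)
    (hE : IsUnit E.det)
    (C : Matrix (Fin p) (Fin q) ℝ) (N : Matrix (Fin q) (Fin p) ℝ)
    (Bf : Matrix (Fin q) (Fin m) ℝ) (Cω : Matrix (Fin p) (Fin p) ℝ)
    (H₁ : Matrix (Fin m) (Fin p) ℝ) (H₂ : Matrix (Fin p) (Fin p) ℝ)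
    (L : Matrix (Fin q) (Fin p) ℝ) (hL : L = E * P⁻¹ * N)
    (hNegDef : ∀ x : Fin q → ℝ, x ≠ 0 →
      x ⬝ᵥ (P * E⁻¹ * A + Aᵀ * (E⁻¹)ᵀ * P - N * C - Cᵀ * Nᵀ).mulVec x < 0)
    (hH₁ : (H₁ * C)ᵀ = P * E⁻¹ * Bf)
    (hH₂ : (H₂ * C)ᵀ = P * E⁻¹ * L * Cω)
    (c η ρ ωb : ℝ) (hc : 0 ≤ c) (hη : 0 ≤ η) (hρ : ρ = c + η) (hωb : 0 ≤ ωb)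
    (e : ℝ → Fin q → ℝ) (he : Differentiable ℝ e)
    (d : ℝ → Fin m → ℝ) (ω : ℝ → Fin p → ℝ)
    (hd : ∀ t i, |d t i| ≤ c) (hω : ∀ t j, |ω t j| ≤ ωb)
    (hdyn : ∀ t, E.mulVec (deriv e t) =
      (A - L * C).mulVec (e t)
        + (L * Cω).mulVec (-(ωb • sgn ((H₂ * C).mulVec (e t))) - ω t)
        + Bf.mulVec (d t - ρ • sgn ((H₁ * C).mulVec (e t)))) :
    Differentiable ℝ (fun t => e t ⬝ᵥ P.mulVec (e t)) ∧
      (∀ t, deriv (fun t => e t ⬝ᵥ P.mulVec (e t)) t ≤ 0) ∧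
      (∀ t, e t ≠ 0 → deriv (fun t => e t ⬝ᵥ P.mulVec (e t)) t < 0) := by
  -- P is invertible
  have hPdet : IsUnit P.det := by
    rw [isUnit_iff_ne_zero]
    intro h0
    obtain ⟨v, hv, hv0⟩ := (Matrix.exists_mulVec_eq_zero_iff).mpr h0
    have := hPpos v hv
    rw [hv0] at this
    simp at this
  set M : Matrix (Fin q) (Fin q) ℝ :=
    P * E⁻¹ * A + Aᵀ * (E⁻¹)ᵀ * P - N * C - Cᵀ * Nᵀ with hM
  have hEinv : E⁻¹ * E = 1 := nonsing_inv_mul E hE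
  have hPPinv : P * P⁻¹ = 1 := mul_nonsing_inv P hPdet
  have hPEL : P * E⁻¹ * L = N := by
    rw [hL, ← Matrix.mul_assoc, ← Matrix.mul_assoc, Matrix.mul_assoc P E⁻¹ E, hEinv,
      Matrix.mul_one, hPPinv, Matrix.one_mul]
  have hKey : P * E⁻¹ * (A - L * C) = P * E⁻¹ * A - N * C := by
    rw [Matrix.mul_sub, ← Matrix.mul_assoc, hPEL]
  have hKT : (P * E⁻¹ * (A - L * C))ᵀ = Aᵀ * (E⁻¹)ᵀ * P - Cᵀ * Nᵀ := by
    simp [hKey, transpose_sub, transpose_mul, hPsymm, Matrix.mul_assoc]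
  have hMdecomp : M = P * E⁻¹ * (A - L * C) + (P * E⁻¹ * (A - L * C))ᵀ := by
    rw [hKT, hKey, hM]; abel
  have hM0 : ∀ t, e t ⬝ᵥ M.mulVec (e t) ≤ 0 := by
    intro t
    by_cases h : e t = 0
    · simp [h]
    · exact le_of_lt (hNegDef (e t) h)
  have hV' : ∀ t, deriv (fun t => e t ⬝ᵥ P.mulVec (e t)) t
      = deriv e t ⬝ᵥ P.mulVec (e t) + e t ⬝ᵥ P.mulVec (deriv e t) :=
    fun t => (hasDerivV P e he t).deriv
  -- main pointwise bound
  have hBound : ∀ t, deriv e t ⬝ᵥ P.mulVec (e t) + e t ⬝ᵥ P.mulVec (deriv e t)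
      ≤ e t ⬝ᵥ M.mulVec (e t) := by
    intro t
    set x := e t with hx
    set x' := deriv e t with hx'
    set s₁ := (H₁ * C).mulVec x with hs₁def
    set s₂ := (H₂ * C).mulVec x with hs₂def
    set u := d t - ρ • sgn s₁ with hu
    set w := -(ωb • sgn s₂) - ω t with hw
    have hx'eq : x' = E⁻¹.mulVec ((A - L * C).mulVec x + (L * Cω).mulVec w + Bf.mulVec u) := by
      rw [← hdyn t, mulVec_mulVec, hEinv, one_mulVec]
    have hsymP : x' ⬝ᵥ P.mulVec x = x ⬝ᵥ P.mulVec x' := by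
      have h := dot_transpose_mulVec P x x'
      rw [hPsymm] at h
      rw [dotProduct_comm, ← h]
    have h2m : P * E⁻¹ * (L * Cω) = (H₂ * C)ᵀ := by
      rw [← Matrix.mul_assoc]; exact hH₂.symm
    have h3m : P * E⁻¹ * Bf = (H₁ * C)ᵀ := hH₁.symm
    have hcross : x ⬝ᵥ P.mulVec x'
        = x ⬝ᵥ (P * E⁻¹ * (A - L * C)).mulVec x + s₂ ⬝ᵥ w + s₁ ⬝ᵥ u := by
      rw [hx'eq, mulVec_mulVec, mulVec_add, mulVec_add, dotProduct_add, dotProduct_add,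
        mulVec_mulVec, mulVec_mulVec, mulVec_mulVec, h2m, h3m,
        dot_transpose_mulVec, dot_transpose_mulVec]
    have hs2w : s₂ ⬝ᵥ w ≤ 0 := by
      rw [dotProduct]
      apply Finset.sum_nonpos
      intro i _
      have h1 : |s₂ i * ω t i| ≤ |s₂ i| * ωb := by
        rw [abs_mul]; exact mul_le_mul_of_nonneg_left (hω t i) (abs_nonneg _)
      have h2 : s₂ i * Real.sign (s₂ i) = |s₂ i| := mul_sign_self_eq_abs _
      have h3 := neg_abs_le (s₂ i * ω t i)
      simp only [hw, Pi.sub_apply, Pi.neg_apply, Pi.smul_apply, smul_eq_mul, sgn]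
      nlinarith [abs_nonneg (s₂ i)]
    have hs1u : s₁ ⬝ᵥ u ≤ 0 := by
      rw [dotProduct]
      apply Finset.sum_nonpos
      intro i _
      have h1 : s₁ i * d t i ≤ |s₁ i| * c := by
        refine le_trans (le_abs_self _) ?_
        rw [abs_mul]; exact mul_le_mul_of_nonneg_left (hd t i) (abs_nonneg _)
      have h2 : s₁ i * Real.sign (s₁ i) = |s₁ i| := mul_sign_self_eq_abs _
      simp only [hu, Pi.sub_apply, Pi.smul_apply, smul_eq_mul, sgn]
      nlinarith [abs_nonneg (s₁ i)]
    have hquad : x ⬝ᵥ (P * E⁻¹ * (A - L * C)).mulVec x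
        + x ⬝ᵥ (P * E⁻¹ * (A - L * C)).mulVec x = x ⬝ᵥ M.mulVec x := by
      rw [hMdecomp, add_mulVec, dotProduct_add, quad_transpose]
    rw [hsymP, hcross]
    linarith
  refine ⟨fun t => (hasDerivV P e he t).differentiableAt, fun t => ?_, fun t ht => ?_⟩
  · rw [hV' t]; exact le_trans (hBound t) (hM0 t)
  · rw [hV' t]; exact lt_of_le_of_lt (hBound t) (hNegDef (e t) ht)
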